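/- Let λ > 0 and c > 1, suppose λ/n ≥ c·‖∇Λ(η₀)‖_∞, and let η̂ be a global minimizer of η ↦ Λ(η) + (λ/n)·‖η‖₁. Let ŝ = |{j : η̂_j ≠ 0}| and let φ ≥ 0 satisfy ‖x_i'δ‖²_{2,n} ≤ φ·‖δ‖² for every δ ∈ ℝ^p with ‖δ‖₀ ≤ ŝ. Then ŝ ≤ (c²/(c−1)²)·(n/λ)²·φ·‖x_i'(η̂ − η₀)‖²_{2,n}. -/

import Mathlib

open Finset

/-- The logistic link function `G(t) = exp t / (1 + exp t)`. -/
noncomputable def logistic (t : ℝ) : ℝ := Real.exp t / (1 + Real.exp t)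

/-- Inner product `x_i'η` of the `i`-th design vector with `η`. -/
def xdot {n p : ℕ} (x : Fin n → Fin p → ℝ) (η : Fin p → ℝ) (i : Fin n) : ℝ :=
  ∑ j, x i j * η j

/-- Average logistic negative log-likelihood
`Λ(η) = (1/n)∑ᵢ [log(1+exp(x_i'η)) − y_i·(x_i'η)]`. -/
noncomputable def Lam {n p : ℕ} (x : Fin n → Fin p → ℝ) (y : Fin n → ℝ)
    (η : Fin p → ℝ) : ℝ :=
  (1 / (n : ℝ)) * ∑ i, (Real.log (1 + Real.exp (xdot x η i)) - y i * xdot x η i)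

/-- Gradient of `Λ`: `∇Λ(η) = (1/n)∑ᵢ (G(x_i'η) − y_i)·x_i`. -/
noncomputable def gradLam {n p : ℕ} (x : Fin n → Fin p → ℝ) (y : Fin n → ℝ)
    (η : Fin p → ℝ) (j : Fin p) : ℝ :=
  (1 / (n : ℝ)) * ∑ i, (logistic (xdot x η i) - y i) * x i j

/-- Sup-norm `‖∇Λ(η)‖_∞` of the gradient of `Λ`. -/
noncomputable def gradLamSup {n p : ℕ} (x : Fin n → Fin p → ℝ) (y : Fin n → ℝ)
    (η : Fin p → ℝ) : ℝ :=
  ⨆ j : Fin p, |gradLam x y η j|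

/-- The logistic weights `w_i = G(x_i'η₀)·(1 − G(x_i'η₀))`. -/
noncomputable def wgt {n p : ℕ} (x : Fin n → Fin p → ℝ) (η₀ : Fin p → ℝ) (i : Fin n) : ℝ :=
  logistic (xdot x η₀ i) * (1 - logistic (xdot x η₀ i))

/-- Weighted prediction norm `‖√w_i·x_i'δ‖_{2,n} = ((1/n)∑ᵢ w_i (x_i'δ)²)^{1/2}`. -/
noncomputable def predNorm {n p : ℕ} (x : Fin n → Fin p → ℝ) (w : Fin n → ℝ)
    (δ : Fin p → ℝ) : ℝ :=
  Real.sqrt ((1 / (n : ℝ)) * ∑ i, w i * xdot x δ i ^ 2)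

/-- Support of a coefficient vector. -/
noncomputable def supp {p : ℕ} (η : Fin p → ℝ) : Finset (Fin p) :=
  Finset.univ.filter (fun j => η j ≠ 0)

/-- ℓ1 norm of a vector in `ℝ^p`. -/
def l1norm {p : ℕ} (δ : Fin p → ℝ) : ℝ := ∑ j, |δ j|

/-- The restricted cone `Δ_c̄ = {δ : ‖δ_{T^c}‖₁ ≤ c̄·‖δ_T‖₁}` for a support set `T`. -/
noncomputable def inCone {p : ℕ} (T : Finset (Fin p)) (cbar : ℝ) (δ : Fin p → ℝ) : Prop :=
  ∑ j ∈ Tᶜ, |δ j| ≤ cbar * ∑ j ∈ T, |δ j|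


lemma one_add_exp_pos (t : ℝ) : 0 < 1 + Real.exp t := by positivity

lemma logistic_nonneg (t : ℝ) : 0 ≤ logistic t := by
  unfold logistic; positivity

lemma logistic_le_one (t : ℝ) : logistic t ≤ 1 := by
  unfold logistic
  rw [div_le_one (one_add_exp_pos t)]; linarith

lemma logistic_mono : Monotone logistic := by
  intro a b hab
  unfold logistic
  rw [div_le_div_iff₀ (one_add_exp_pos a) (one_add_exp_pos b)]
  nlinarith [Real.exp_le_exp.2 hab, Real.exp_pos a, Real.exp_pos b]

lemma hasDerivAt_log1exp (t : ℝ) :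
    HasDerivAt (fun u => Real.log (1 + Real.exp u)) (logistic t) t := by
  have h1 : HasDerivAt (fun u => 1 + Real.exp u) (Real.exp t) t :=
    (Real.hasDerivAt_exp t).const_add 1
  have := h1.log (ne_of_gt (one_add_exp_pos t))
  simpa [logistic] using this

lemma hasDerivAt_logistic (t : ℝ) :
    HasDerivAt logistic (logistic t * (1 - logistic t)) t := by
  have h1 : HasDerivAt (fun u => 1 + Real.exp u) (Real.exp t) t :=
    (Real.hasDerivAt_exp t).const_add 1
  have h2 := (Real.hasDerivAt_exp t).div h1 (ne_of_gt (one_add_exp_pos t))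
  refine (h2 : HasDerivAt logistic _ t).congr_deriv ?_
  have hpos := one_add_exp_pos t
  simp only [logistic]
  field_simp

lemma log1exp_tangent (a b : ℝ) :
    Real.log (1 + Real.exp a) - Real.log (1 + Real.exp b) ≤ logistic a * (a - b) := by
  rcases lt_trichotomy a b with h | h | h
  · obtain ⟨c, hc, hderiv⟩ := exists_hasDerivAt_eq_slope
      (fun u => Real.log (1 + Real.exp u)) logistic h
      (fun u _ => (hasDerivAt_log1exp u).continuousAt.continuousWithinAt)
      (fun u _ => hasDerivAt_log1exp u)
    have hmono : logistic a ≤ logistic c := logistic_mono hc.1.le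
    have hba : 0 < b - a := by linarith
    have : Real.log (1 + Real.exp b) - Real.log (1 + Real.exp a) = logistic c * (b - a) := by
      field_simp at hderiv ⊢; linarith [hderiv]
    nlinarith
  · simp [h]
  · obtain ⟨c, hc, hderiv⟩ := exists_hasDerivAt_eq_slope
      (fun u => Real.log (1 + Real.exp u)) logistic h
      (fun u _ => (hasDerivAt_log1exp u).continuousAt.continuousWithinAt)
      (fun u _ => hasDerivAt_log1exp u)
    have hmono : logistic c ≤ logistic a := logistic_mono hc.2.le
    have hba : 0 < a - b := by linarith
    have : Real.log (1 + Real.exp a) - Real.log (1 + Real.exp b) = logistic c * (a - b) := by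
      field_simp at hderiv ⊢; linarith [hderiv]
    nlinarith

lemma logistic_lipschitz (a b : ℝ) : |logistic a - logistic b| ≤ |a - b| := by
  wlog hab : b ≤ a with H
  · have := H b a (by linarith)
    rw [abs_sub_comm (logistic a), abs_sub_comm a]; exact this
  rcases eq_or_lt_of_le hab with h | h
  · simp [h]
  · obtain ⟨c, hc, hderiv⟩ := exists_hasDerivAt_eq_slope logistic
      (fun u => logistic u * (1 - logistic u)) h
      (fun u _ => (hasDerivAt_logistic u).continuousAt.continuousWithinAt)
      (fun u _ => hasDerivAt_logistic u)
    have h1 : 0 ≤ logistic c := logistic_nonneg c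
    have h2 : logistic c ≤ 1 := logistic_le_one c
    have hba : 0 < a - b := by linarith
    have heq : logistic a - logistic b = logistic c * (1 - logistic c) * (a - b) := by
      field_simp at hderiv; linarith [hderiv]
    rw [heq, abs_of_pos hba]
    rw [abs_le]
    have hnn : 0 ≤ logistic c * (1 - logistic c) * (a - b) :=
      mul_nonneg (mul_nonneg h1 (by linarith)) hba.le
    have hle : logistic c * (1 - logistic c) ≤ 1 := by nlinarith
    have := mul_le_mul_of_nonneg_right hle hba.le
    constructor <;> linarith

lemma xdot_update {n p : ℕ} (x : Fin n → Fin p → ℝ) (η : Fin p → ℝ) (j : Fin p)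
    (t : ℝ) (i : Fin n) :
    xdot x (fun k => η k + if k = j then t else 0) i = xdot x η i + t * x i j := by
  unfold xdot
  simp only [mul_add, Finset.sum_add_distrib, mul_ite, mul_zero]
  rw [Finset.sum_ite_eq' Finset.univ j (fun k => x i k * t)]
  simp [mul_comm]

lemma kkt {n p : ℕ} (hn : 0 < n) (x : Fin n → Fin p → ℝ) (y : Fin n → ℝ)
    (lam : ℝ) (ηhat : Fin p → ℝ)
    (hmin : ∀ η : Fin p → ℝ,
      Lam x y ηhat + (lam / (n : ℝ)) * l1norm ηhat
        ≤ Lam x y η + (lam / (n : ℝ)) * l1norm η)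
    (j : Fin p) (hj : ηhat j ≠ 0) :
    lam / (n : ℝ) ≤ |gradLam x y ηhat j| := by
  have hnpos : (0:ℝ) < (n:ℝ) := by exact_mod_cast hn
  set M : ℝ := (1 / (n:ℝ)) * ∑ i, x i j ^ 2 with hM
  have hMnn : 0 ≤ M := by positivity
  have key : ∀ s : ℝ, 0 < s → s ≤ |ηhat j| →
      lam / (n:ℝ) ≤ |gradLam x y ηhat j| + s * M := by
    intro s hs hsle
    set sgn : ℝ := if 0 < ηhat j then 1 else -1 with hsgn
    have habs_sgn : |sgn| = 1 := by
      rcases lt_or_ge 0 (ηhat j) with h | h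
      · simp [hsgn, if_pos h]
      · simp [hsgn, if_neg (not_lt.2 h)]
    set t : ℝ := -s * sgn with ht
    have habs_t : |t| = s := by
      rw [ht, abs_mul, abs_neg, abs_of_pos hs, habs_sgn, mul_one]
    set ηs : Fin p → ℝ := fun k => ηhat k + if k = j then t else 0 with hηs
    have hxs : ∀ i, xdot x ηs i = xdot x ηhat i + t * x i j :=
      fun i => xdot_update x ηhat j t i
    -- l1 norm decreases by s
    have hl1 : l1norm ηs = l1norm ηhat - s := by
      have hdiff : ∀ k, k ≠ j → |ηs k| = |ηhat k| := by
        intro k hk; simp [hηs, hk]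
      have habsj : |ηs j| = |ηhat j| - s := by
        rcases lt_or_ge 0 (ηhat j) with h | h
        · have he : ηs j = ηhat j - s := by
            show ηhat j + (if j = j then t else 0) = ηhat j - s
            rw [if_pos rfl, ht, hsgn, if_pos h]; ring
          rw [abs_of_pos h] at hsle
          rw [he, abs_of_nonneg (by linarith), abs_of_pos h]
        · have hneg : ηhat j < 0 := h.lt_of_ne hj
          have he : ηs j = ηhat j + s := by
            show ηhat j + (if j = j then t else 0) = ηhat j + s
            rw [if_pos rfl, ht, hsgn, if_neg (not_lt.2 h)]; ring
          rw [abs_of_neg hneg] at hsle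
          rw [he, abs_of_nonpos (by linarith), abs_of_neg hneg]; ring
      unfold l1norm
      have hsum : ∑ k, |ηs k| - ∑ k, |ηhat k| = |ηs j| - |ηhat j| := by
        rw [← Finset.sum_sub_distrib]
        rw [Finset.sum_eq_single j]
        · intro k _ hk; rw [hdiff k hk]; ring
        · intro h; exact absurd (Finset.mem_univ j) h
      rw [habsj] at hsum; linarith
    -- minimality gives lower bound on Lam difference
    have hmin' := hmin ηs
    rw [hl1] at hmin'
    have hLs : (lam / (n:ℝ)) * s ≤ Lam x y ηs - Lam x y ηhat := by
      nlinarith [hmin']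
    -- convexity gives upper bound
    have h1n : (0:ℝ) ≤ 1/(n:ℝ) := by positivity
    have hterm : ∀ i : Fin n,
        (Real.log (1 + Real.exp (xdot x ηs i)) - y i * xdot x ηs i)
          - (Real.log (1 + Real.exp (xdot x ηhat i)) - y i * xdot x ηhat i)
        ≤ (logistic (xdot x ηs i) - y i) * x i j * t := by
      intro i
      have h2 : xdot x ηs i - xdot x ηhat i = t * x i j := by rw [hxs i]; ring
      have htan := log1exp_tangent (xdot x ηs i) (xdot x ηhat i)
      rw [h2] at htan
      have h3 : y i * xdot x ηs i - y i * xdot x ηhat i = y i * (t * x i j) := by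
        rw [← mul_sub, h2]
      ring_nf at htan h3 ⊢
      linarith
    have hconv : Lam x y ηs - Lam x y ηhat ≤ t * gradLam x y ηs j := by
      unfold Lam gradLam
      rw [← mul_sub, ← Finset.sum_sub_distrib]
      have hsum := Finset.sum_le_sum (fun i (_ : i ∈ Finset.univ) => hterm i)
      have h2 : ∑ i, (logistic (xdot x ηs i) - y i) * x i j * t
          = (∑ i, (logistic (xdot x ηs i) - y i) * x i j) * t := by
        rw [Finset.sum_mul]
      calc (1/(n:ℝ)) * ∑ i, ((Real.log (1 + Real.exp (xdot x ηs i)) - y i * xdot x ηs i)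
              - (Real.log (1 + Real.exp (xdot x ηhat i)) - y i * xdot x ηhat i))
          ≤ (1/(n:ℝ)) * ∑ i, (logistic (xdot x ηs i) - y i) * x i j * t :=
            mul_le_mul_of_nonneg_left hsum h1n
        _ = t * ((1/(n:ℝ)) * ∑ i, (logistic (xdot x ηs i) - y i) * x i j) := by
            rw [h2]; ring
    -- gradient perturbation bound
    have hgrad : |gradLam x y ηs j - gradLam x y ηhat j| ≤ s * M := by
      unfold gradLam
      rw [← mul_sub, ← Finset.sum_sub_distrib]
      have hterm2 : ∀ i : Fin n,
          |(logistic (xdot x ηs i) - y i) * x i j - (logistic (xdot x ηhat i) - y i) * x i j|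
            ≤ s * x i j ^ 2 := by
        intro i
        have h2 : xdot x ηs i - xdot x ηhat i = t * x i j := by rw [hxs i]; ring
        have hlip := logistic_lipschitz (xdot x ηs i) (xdot x ηhat i)
        rw [h2, abs_mul, habs_t] at hlip
        have he : (logistic (xdot x ηs i) - y i) * x i j
            - (logistic (xdot x ηhat i) - y i) * x i j
            = (logistic (xdot x ηs i) - logistic (xdot x ηhat i)) * x i j := by ring
        rw [he, abs_mul]
        calc |logistic (xdot x ηs i) - logistic (xdot x ηhat i)| * |x i j|
            ≤ (s * |x i j|) * |x i j| := mul_le_mul_of_nonneg_right hlip (abs_nonneg _)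
          _ = s * x i j ^ 2 := by rw [mul_assoc, ← sq_abs]; ring_nf
      calc |(1/(n:ℝ)) * ∑ i, ((logistic (xdot x ηs i) - y i) * x i j
              - (logistic (xdot x ηhat i) - y i) * x i j)|
          = (1/(n:ℝ)) * |∑ i, ((logistic (xdot x ηs i) - y i) * x i j
              - (logistic (xdot x ηhat i) - y i) * x i j)| := by
            rw [abs_mul, abs_of_nonneg h1n]
        _ ≤ (1/(n:ℝ)) * ∑ i, |(logistic (xdot x ηs i) - y i) * x i j
              - (logistic (xdot x ηhat i) - y i) * x i j| :=
            mul_le_mul_of_nonneg_left (Finset.abs_sum_le_sum_abs _ _) h1n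
        _ ≤ (1/(n:ℝ)) * ∑ i, s * x i j ^ 2 :=
            mul_le_mul_of_nonneg_left (Finset.sum_le_sum fun i _ => hterm2 i) h1n
        _ = s * M := by rw [hM, ← Finset.mul_sum]; ring
    -- combine
    have habs2 : t * gradLam x y ηs j ≤ s * |gradLam x y ηs j| := by
      calc t * gradLam x y ηs j ≤ |t * gradLam x y ηs j| := le_abs_self _
        _ = s * |gradLam x y ηs j| := by rw [abs_mul, habs_t]
    have htri : |gradLam x y ηs j| ≤ |gradLam x y ηhat j| + s * M := by
      have h3 := abs_sub_abs_le_abs_sub (gradLam x y ηs j) (gradLam x y ηhat j)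
      linarith
    have hfin : (lam/(n:ℝ)) * s ≤ s * (|gradLam x y ηhat j| + s * M) := by
      have h4 := mul_le_mul_of_nonneg_left htri hs.le
      linarith
    have := (mul_le_mul_iff_of_pos_right hs).mp (by linarith [hfin] :
      (lam/(n:ℝ)) * s ≤ (|gradLam x y ηhat j| + s * M) * s)
    linarith
  -- limit s → 0
  apply le_of_forall_pos_le_add
  intro ε hε
  have hjpos : 0 < |ηhat j| := abs_pos.2 hj
  set s := min (|ηhat j|) (ε/(M+1)) with hsdef
  have hspos : 0 < s := lt_min hjpos (by positivity)
  have hk := key s hspos (min_le_left _ _)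
  have hsM : s * M ≤ ε := by
    have h1 : s ≤ ε/(M+1) := min_le_right _ _
    have h2 : s * M ≤ (ε/(M+1)) * M := mul_le_mul_of_nonneg_right h1 hMnn
    have h3 : (ε/(M+1)) * M ≤ ε := by
      rw [div_mul_eq_mul_div, div_le_iff₀ (by linarith)]
      nlinarith
    linarith
  linarith

lemma xdot_sub {n p : ℕ} (x : Fin n → Fin p → ℝ) (η ζ : Fin p → ℝ) (i : Fin n) :
    xdot x (η - ζ) i = xdot x η i - xdot x ζ i := by
  unfold xdot
  rw [← Finset.sum_sub_distrib]
  exact Finset.sum_congr rfl fun j _ => by simp [mul_sub]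


set_option maxHeartbeats 1000000 in
/-- First sparsity bound for the ℓ1-penalized logistic regression estimator
(Lemma B.6, first relation): with `λ/n ≥ c‖∇Λ(η₀)‖_∞`, `c > 1`, and `φ` a maximal
sparse eigenvalue valid at sparsity level `ŝ = ‖η̂‖₀`, one has
`ŝ ≤ (c²/(c−1)²)(n/λ)²·φ·‖x_i'(η̂−η₀)‖²_{2,n}`. -/
theorem lasso_logistic_sparsity {n p : ℕ} (hn : 0 < n) (hp : 0 < p)
    (x : Fin n → Fin p → ℝ) (y : Fin n → ℝ) (hy : ∀ i, y i = 0 ∨ y i = 1)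
    (η₀ : Fin p → ℝ) (hs : 1 ≤ (supp η₀).card)
    (lam c : ℝ) (hlam : 0 < lam) (hc : 1 < c)
    (hpen : c * gradLamSup x y η₀ ≤ lam / (n : ℝ))
    (ηhat : Fin p → ℝ)
    (hmin : ∀ η : Fin p → ℝ,
      Lam x y ηhat + (lam / (n : ℝ)) * l1norm ηhat
        ≤ Lam x y η + (lam / (n : ℝ)) * l1norm η)
    (φ : ℝ) (hφ : 0 ≤ φ)
    (hφbound : ∀ δ : Fin p → ℝ, (supp δ).card ≤ (supp ηhat).card →
      (1 / (n : ℝ)) * ∑ i, xdot x δ i ^ 2 ≤ φ * ∑ j, δ j ^ 2) :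
    ((supp ηhat).card : ℝ)
      ≤ (c ^ 2 / (c - 1) ^ 2) * ((n : ℝ) / lam) ^ 2 * φ
          * ((1 / (n : ℝ)) * ∑ i, xdot x (ηhat - η₀) i ^ 2) := by
  have hnpos : (0:ℝ) < (n:ℝ) := by exact_mod_cast hn
  set T : Finset (Fin p) := supp ηhat with hT
  set L : ℝ := lam / (n:ℝ) with hL
  have hLpos : 0 < L := by positivity
  set Q : ℝ := (1 / (n : ℝ)) * ∑ i, xdot x (ηhat - η₀) i ^ 2 with hQ
  have hQnn : 0 ≤ Q := by positivity
  set g : Fin p → ℝ := gradLam x y ηhat with hg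
  set g0 : Fin p → ℝ := gradLam x y η₀ with hg0
  set D : Fin p → ℝ := fun j => g j - g0 j with hD
  -- KKT
  have hkkt : ∀ j ∈ T, L ≤ |g j| := by
    intro j hj
    have hj' : ηhat j ≠ 0 := by simpa [hT, supp] using hj
    exact kkt hn x y lam ηhat hmin j hj'
  -- sup norm bound
  have hg0b : ∀ j, |g0 j| ≤ L / c := by
    intro j
    have h1 : |g0 j| ≤ gradLamSup x y η₀ := by
      unfold gradLamSup
      exact le_ciSup (f := fun k => |gradLam x y η₀ k|)
        (Set.Finite.bddAbove (Set.finite_range _)) j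
    have hc0 : (0:ℝ) < c := by linarith
    have h2 : gradLamSup x y η₀ ≤ L / c := by
      rw [le_div_iff₀ hc0]; nlinarith [hpen]
    linarith
  -- the B bound via Cauchy–Schwarz and the sparse eigenvalue
  set B : ℝ := ∑ j ∈ T, D j ^ 2 with hB
  have hBnn : 0 ≤ B := Finset.sum_nonneg fun j _ => sq_nonneg _
  set v : Fin p → ℝ := fun j => if j ∈ T then D j else 0 with hv
  have hvsq : ∑ j, v j ^ 2 = B := by
    have h1 : ∀ j : Fin p, v j ^ 2 = if j ∈ T then D j ^ 2 else 0 := by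
      intro j; by_cases h : j ∈ T <;> simp [hv, h]
    simp_rw [h1]
    rw [Finset.sum_ite_mem, Finset.univ_inter]
  have hBv : ∑ j, v j * D j = B := by
    have h1 : ∀ j : Fin p, v j * D j = if j ∈ T then D j ^ 2 else 0 := by
      intro j; by_cases h : j ∈ T <;> simp [hv, h, sq]
    simp_rw [h1]
    rw [Finset.sum_ite_mem, Finset.univ_inter]
  have hsuppv : (supp v).card ≤ T.card := by
    apply Finset.card_le_card
    intro j hj
    have : v j ≠ 0 := by simpa [supp] using hj
    by_contra h
    exact this (by simp [hv, h])
  -- rewrite D via sums over i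
  have hDrep : ∀ j, D j = (1/(n:ℝ)) * ∑ i, (logistic (xdot x ηhat i) - logistic (xdot x η₀ i)) * x i j := by
    intro j
    rw [hD]
    show gradLam x y ηhat j - gradLam x y η₀ j = _
    unfold gradLam
    rw [← mul_sub, ← Finset.sum_sub_distrib]
    congr 1
    exact Finset.sum_congr rfl fun i _ => by ring
  have hswap : ∑ j, v j * D j
      = (1/(n:ℝ)) * ∑ i, (logistic (xdot x ηhat i) - logistic (xdot x η₀ i)) * xdot x v i := by
    calc ∑ j, v j * D j
        = ∑ j, ∑ i, (1/(n:ℝ)) * ((logistic (xdot x ηhat i) - logistic (xdot x η₀ i)) * (x i j * v j)) := by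
          refine Finset.sum_congr rfl fun j _ => ?_
          rw [hDrep j, Finset.mul_sum, Finset.mul_sum]
          exact Finset.sum_congr rfl fun i _ => by ring
      _ = ∑ i, ∑ j, (1/(n:ℝ)) * ((logistic (xdot x ηhat i) - logistic (xdot x η₀ i)) * (x i j * v j)) :=
          Finset.sum_comm
      _ = (1/(n:ℝ)) * ∑ i, (logistic (xdot x ηhat i) - logistic (xdot x η₀ i)) * xdot x v i := by
          rw [Finset.mul_sum]
          refine Finset.sum_congr rfl fun i _ => ?_
          unfold xdot
          rw [Finset.mul_sum, Finset.mul_sum]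
  have h1n : (0:ℝ) ≤ 1/(n:ℝ) := by positivity
  -- B ≤ φ * Q via Cauchy–Schwarz, squared version
  have hQ' : (1/(n:ℝ)) * ∑ i, (logistic (xdot x ηhat i) - logistic (xdot x η₀ i)) ^ 2 ≤ Q := by
    rw [hQ]
    apply mul_le_mul_of_nonneg_left _ h1n
    refine Finset.sum_le_sum fun i _ => ?_
    have hlip := logistic_lipschitz (xdot x ηhat i) (xdot x η₀ i)
    have h2 : xdot x (ηhat - η₀) i = xdot x ηhat i - xdot x η₀ i := xdot_sub x ηhat η₀ i
    rw [h2]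
    have h3 := pow_le_pow_left₀ (abs_nonneg _) hlip 2
    rwa [sq_abs, sq_abs] at h3
  have hw2 : (1/(n:ℝ)) * ∑ i, xdot x v i ^ 2 ≤ φ * B := by
    have h4 := hφbound v hsuppv
    rwa [hvsq] at h4
  have hw2nn : (0:ℝ) ≤ (1/(n:ℝ)) * ∑ i, xdot x v i ^ 2 := by positivity
  have hΔnn : (0:ℝ) ≤ (1/(n:ℝ)) * ∑ i, (logistic (xdot x ηhat i) - logistic (xdot x η₀ i)) ^ 2 := by
    positivity
  have hB2 : B ^ 2 ≤ Q * (φ * B) := by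
    have hcs := Finset.sum_mul_sq_le_sq_mul_sq Finset.univ
      (fun i => logistic (xdot x ηhat i) - logistic (xdot x η₀ i)) (fun i => xdot x v i)
    have hBe : B = (1/(n:ℝ)) * ∑ i, (logistic (xdot x ηhat i) - logistic (xdot x η₀ i)) * xdot x v i := by
      rw [← hBv, hswap]
    have h5 : B ^ 2 = (1/(n:ℝ))^2 * (∑ i, (logistic (xdot x ηhat i) - logistic (xdot x η₀ i)) * xdot x v i) ^ 2 := by
      rw [hBe]; ring
    have h6 : (1/(n:ℝ))^2 * (∑ i, (logistic (xdot x ηhat i) - logistic (xdot x η₀ i)) * xdot x v i) ^ 2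
        ≤ (1/(n:ℝ))^2 * ((∑ i, (logistic (xdot x ηhat i) - logistic (xdot x η₀ i)) ^ 2)
            * ∑ i, xdot x v i ^ 2) :=
      mul_le_mul_of_nonneg_left hcs (by positivity)
    have h7 : (1/(n:ℝ))^2 * ((∑ i, (logistic (xdot x ηhat i) - logistic (xdot x η₀ i)) ^ 2)
            * ∑ i, xdot x v i ^ 2)
        = ((1/(n:ℝ)) * ∑ i, (logistic (xdot x ηhat i) - logistic (xdot x η₀ i)) ^ 2)
            * ((1/(n:ℝ)) * ∑ i, xdot x v i ^ 2) := by ring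
    have h8 := mul_le_mul hQ' hw2 hw2nn hQnn
    calc B ^ 2 = _ := h5
      _ ≤ _ := h6
      _ = _ := h7
      _ ≤ Q * (φ * B) := h8
  have hBle : B ≤ φ * Q := by
    rcases eq_or_lt_of_le hBnn with h | h
    · rw [← h]; exact mul_nonneg hφ hQnn
    · have h9 : B * B ≤ (Q * φ) * B := by
        have h9' := hB2
        calc B * B = B ^ 2 := (sq B).symm
          _ ≤ Q * (φ * B) := h9'
          _ = (Q * φ) * B := by ring
      have h10' := (mul_le_mul_iff_of_pos_right h).mp h9
      linarith [h10']
  -- A and the KKT sum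
  set A : ℝ := ∑ j ∈ T, g0 j ^ 2 with hA
  have hAnn : 0 ≤ A := Finset.sum_nonneg fun j _ => sq_nonneg _
  have hAle : A ≤ (T.card : ℝ) * (L/c) ^ 2 := by
    rw [hA]
    calc ∑ j ∈ T, g0 j ^ 2 ≤ ∑ j ∈ T, (L/c) ^ 2 := by
          refine Finset.sum_le_sum fun j _ => ?_
          have h10 := pow_le_pow_left₀ (abs_nonneg _) (hg0b j) 2
          rwa [sq_abs] at h10
      _ = (T.card : ℝ) * (L/c) ^ 2 := by rw [Finset.sum_const, nsmul_eq_mul]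
  have hcard : (T.card : ℝ) * L ^ 2 ≤ ∑ j ∈ T, g j ^ 2 := by
    calc (T.card : ℝ) * L ^ 2 = ∑ _j ∈ T, L ^ 2 := by rw [Finset.sum_const, nsmul_eq_mul]
      _ ≤ ∑ j ∈ T, g j ^ 2 := by
          refine Finset.sum_le_sum fun j hj => ?_
          have h11 := pow_le_pow_left₀ hLpos.le (hkkt j hj) 2
          rwa [sq_abs] at h11
  have hgD : ∑ j ∈ T, g j ^ 2 = A + 2 * ∑ j ∈ T, g0 j * D j + B := by
    rw [hA, hB, Finset.mul_sum, ← Finset.sum_add_distrib, ← Finset.sum_add_distrib]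
    refine Finset.sum_congr rfl fun j _ => ?_
    have : D j = g j - g0 j := rfl
    rw [this]; ring
  clear_value T L Q A B g g0 D v
  have hcs2 : ∑ j ∈ T, g0 j * D j ≤ Real.sqrt A * Real.sqrt B := by
    rw [hA, hB]
    exact Real.sum_mul_le_sqrt_mul_sqrt T g0 D
  have hsq : (T.card : ℝ) * L ^ 2 ≤ (Real.sqrt A + Real.sqrt B) ^ 2 := by
    have h12 : (Real.sqrt A + Real.sqrt B) ^ 2
        = A + 2 * (Real.sqrt A * Real.sqrt B) + B := by
      rw [add_sq, Real.sq_sqrt hAnn, Real.sq_sqrt hBnn]; ring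
    rw [hgD] at hcard
    linarith [hcs2]
  have hS : Real.sqrt ((T.card : ℝ)) * L ≤ Real.sqrt A + Real.sqrt B := by
    have h13 := Real.sqrt_le_sqrt hsq
    rwa [Real.sqrt_mul (Nat.cast_nonneg T.card) (L^2), Real.sqrt_sq hLpos.le,
      Real.sqrt_sq (by positivity : (0:ℝ) ≤ Real.sqrt A + Real.sqrt B)] at h13
  have hsqA : Real.sqrt A ≤ Real.sqrt ((T.card : ℝ)) * (L/c) := by
    have h14 := Real.sqrt_le_sqrt hAle
    rwa [Real.sqrt_mul (Nat.cast_nonneg T.card) ((L/c)^2),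
      Real.sqrt_sq (by positivity : (0:ℝ) ≤ L/c)] at h14
  have hsqB : Real.sqrt B ≤ Real.sqrt (φ * Q) := Real.sqrt_le_sqrt hBle
  have hc0 : (0:ℝ) < c := by linarith
  have hKnn : 0 ≤ L * (c - 1) / c := by
    apply div_nonneg _ hc0.le
    nlinarith [hLpos]
  have hfinal : Real.sqrt ((T.card : ℝ)) * (L * (c - 1) / c) ≤ Real.sqrt (φ * Q) := by
    have h15 : Real.sqrt ((T.card : ℝ)) * L - Real.sqrt ((T.card : ℝ)) * (L/c)
        = Real.sqrt ((T.card : ℝ)) * (L * (c - 1) / c) := by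
      field_simp
    linarith [hS, hsqA, hsqB]
  have hsqf : (T.card : ℝ) * (L * (c - 1) / c) ^ 2 ≤ φ * Q := by
    have h16 := pow_le_pow_left₀ (mul_nonneg (Real.sqrt_nonneg _) hKnn) hfinal 2
    rwa [mul_pow, Real.sq_sqrt (Nat.cast_nonneg T.card),
      Real.sq_sqrt (mul_nonneg hφ hQnn)] at h16
  -- conclude
  have hKpos : 0 < (L * (c - 1) / c) ^ 2 := by
    apply pow_pos
    apply div_pos _ hc0
    apply mul_pos hLpos
    linarith
  have h17 : (T.card : ℝ) ≤ (φ * Q) / (L * (c - 1) / c) ^ 2 := by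
    rw [le_div_iff₀ hKpos]
    exact hsqf
  have h18 : (φ * Q) / (L * (c - 1) / c) ^ 2
      = (c ^ 2 / (c - 1) ^ 2) * ((n : ℝ) / lam) ^ 2 * φ * Q := by
    rw [hL]
    have hne1 : (n:ℝ) ≠ 0 := ne_of_gt hnpos
    have hne2 : lam ≠ 0 := ne_of_gt hlam
    have hne3 : c ≠ 0 := ne_of_gt hc0
    have hne4 : c - 1 ≠ 0 := by intro h; exact absurd h (by intro hh; linarith [hc])
    field_simp
  rw [h18] at h17
  exact h17
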